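/- Let Z_1,...,Z_n be i.i.d., Ω ∈ ℝ^{K×K}, and for t ∈ [0,1] let h_t(Z) = Σ_{k} Ω_{k Ỹ} 1{ŝ(X,k) ≤ t} where Z = (X, Ỹ). Assume each marginal CDF F̃^k(t) = P(ŝ(X,k) ≤ t) is continuous and strictly increasing on [0,1]. Then for every ε ∈ (0,1] the class H = {h_t : t ∈ [0,1]} admits an η-cover in L²(P) of cardinality at most (K/ε)^{2K}, with η = ε · max_{k,l} |Ω_{kl}| / √2; here an η-cover is a set G such that for every t there is g ∈ G with E[(h_t(Z) − g(Z))²] ≤ η². -/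

import Mathlib

open MeasureTheory ProbabilityTheory

private lemma integrable_of_bdd' {α : Type*} [MeasurableSpace α] {μ : Measure α}
    [IsFiniteMeasure μ] {f : α → ℝ} (hf : Measurable f) (C : ℝ) (hC : ∀ x, |f x| ≤ C) :
    Integrable f μ :=
  (integrable_const C).mono' hf.aestronglyMeasurable
    (Filter.Eventually.of_forall (fun x => by simpa [Real.norm_eq_abs] using hC x))

set_option maxHeartbeats 1000000 in
/-- Covering-number bound for the class `H = {h_t : t ∈ [0,1]}`, where
`h_t(z) = ∑_k Ω_{k Ỹ} 1{ŝ(x,k) ≤ t}` for `z = (x, Ỹ)`: if every marginal CDF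
`F̃^k(t) = P(ŝ(X,k) ≤ t)` is continuous and strictly increasing on `[0,1]`, then for every
`ε ∈ (0,1]` the class `H` admits an `η`-cover in `L²(P)` of cardinality at most
`(K/ε)^(2K)`, with `η = ε · max_{k,l} |Ω_{kl}| / √2`. -/
theorem covering_number_indicator_class
    {𝓧 : Type*} [MeasurableSpace 𝓧]
    (K : ℕ) (hK : 0 < K)
    (μ : Measure (𝓧 × Fin K)) [IsProbabilityMeasure μ]
    (Om : Fin K → Fin K → ℝ)
    (s : 𝓧 → Fin K → ℝ) (hs_meas : ∀ k, Measurable fun x => s x k)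
    (hs_range : ∀ x k, s x k ∈ Set.Icc (0 : ℝ) 1)
    (hcont : ∀ k : Fin K,
      ContinuousOn (fun t => (μ {z | s z.1 k ≤ t}).toReal) (Set.Icc (0 : ℝ) 1))
    (hmono : ∀ k : Fin K,
      StrictMonoOn (fun t => (μ {z | s z.1 k ≤ t}).toReal) (Set.Icc (0 : ℝ) 1)) :
    ∀ ε ∈ Set.Ioc (0 : ℝ) 1,
      ∃ G : Finset ((𝓧 × Fin K) → ℝ),
        (G.card : ℝ) ≤ ((K : ℝ) / ε) ^ (2 * K)
        ∧ ∀ t ∈ Set.Icc (0 : ℝ) 1, ∃ g ∈ G,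
            ∫ z, ((∑ k, Om k z.2 * (if s z.1 k ≤ t then (1 : ℝ) else 0)) - g z) ^ 2 ∂μ
              ≤ (ε * (Finset.univ.sup' ⟨(⟨0, hK⟩, ⟨0, hK⟩), Finset.mem_univ _⟩
                    fun kl : Fin K × Fin K => |Om kl.1 kl.2|) / Real.sqrt 2) ^ 2 := by
  classical
  intro ε hε
  obtain ⟨hε0, hε1⟩ := hε
  set M : ℝ := Finset.univ.sup' ⟨(⟨0, hK⟩, ⟨0, hK⟩), Finset.mem_univ _⟩
      (fun kl : Fin K × Fin K => |Om kl.1 kl.2|) with hMdef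
  have hMle : ∀ k l : Fin K, |Om k l| ≤ M := by
    intro k l
    have h := Finset.le_sup' (s := (Finset.univ : Finset (Fin K × Fin K)))
      (f := fun kl : Fin K × Fin K => |Om kl.1 kl.2|) (Finset.mem_univ (k, l))
    simpa [hMdef] using h
  have hM0 : (0:ℝ) ≤ M := (abs_nonneg _).trans (hMle ⟨0, hK⟩ ⟨0, hK⟩)
  set F : Fin K → ℝ → ℝ := fun k t => (μ {z | s z.1 k ≤ t}).toReal with hFdef
  have hcont' : ∀ k : Fin K, ContinuousOn (F k) (Set.Icc (0:ℝ) 1) := hcont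
  have hmono' : ∀ k : Fin K, StrictMonoOn (F k) (Set.Icc (0:ℝ) 1) := hmono
  have hSmeas : ∀ (k : Fin K) (c : ℝ), MeasurableSet {z : 𝓧 × Fin K | s z.1 k ≤ c} :=
    fun k c => measurableSet_le ((hs_meas k).comp measurable_fst) measurable_const
  have hF1 : ∀ k, F k 1 = 1 := by
    intro k
    have h : {z : 𝓧 × Fin K | s z.1 k ≤ 1} = Set.univ := by
      ext z; simpa using (hs_range z.1 k).2
    simp [hFdef, h]
  have hFmono : ∀ k, Monotone (F k) := by
    intro k u v huv
    exact ENNReal.toReal_mono (measure_ne_top μ _)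
      (measure_mono (fun z hz => le_trans hz huv))
  have hF0nonneg : ∀ k, (0:ℝ) ≤ F k 0 := fun k => ENNReal.toReal_nonneg
  have hF0 : ∀ k, F k 0 < 1 := by
    intro k
    have h := hmono' k (Set.left_mem_Icc.mpr zero_le_one)
      (Set.right_mem_Icc.mpr zero_le_one) zero_lt_one
    rw [hF1 k] at h
    exact h
  -- grid size
  set x : ℝ := (K:ℝ)^2 / ε^2 with hxdef
  have hK1 : (1:ℝ) ≤ (K:ℝ) := by exact_mod_cast hK
  have hx1 : 1 ≤ x := by
    rw [hxdef, le_div_iff₀ (by positivity)]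
    nlinarith
  set b : ℕ := ⌈x/2⌉₊ with hbdef
  have hb1 : 1 ≤ b := by
    rw [hbdef]
    have hpos : (0:ℝ) < x/2 := by linarith
    exact Nat.ceil_pos.mpr hpos
  have hbpos : (0:ℝ) < b := by exact_mod_cast hb1
  have hxb : x/2 ≤ (b:ℝ) := Nat.le_ceil _
  have hbx : (b:ℝ) ≤ x := by
    rcases le_or_gt 2 x with h | h
    · have h2 : (b:ℝ) < x/2 + 1 := by
        rw [hbdef]
        exact Nat.ceil_lt_add_one (by linarith)
      linarith
    · have h2 : b ≤ 1 := by
        rw [hbdef, Nat.ceil_le]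
        push_cast
        linarith
      have h3 : (b:ℝ) ≤ 1 := by exact_mod_cast h2
      linarith
  -- levels and quantiles
  set lv : Fin K → ℕ → ℝ := fun k j => F k 0 + ((j:ℝ)/b) * (1 - F k 0) with hlvdef
  have hlv_mem : ∀ (k : Fin K) (j : ℕ), j ≤ b → lv k j ∈ Set.Icc (F k 0) (F k 1) := by
    intro k j hj
    have hL : (0:ℝ) < 1 - F k 0 := by linarith [hF0 k]
    have hjb : ((j:ℝ))/b ≤ 1 := by
      rw [div_le_one hbpos]; exact_mod_cast hj
    have hjb0 : (0:ℝ) ≤ (j:ℝ)/b := by positivity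
    constructor
    · simp only [hlvdef]
      nlinarith
    · rw [hF1 k]
      simp only [hlvdef]
      nlinarith
  have hquant : ∀ (k : Fin K) (j : ℕ), ∃ q ∈ Set.Icc (0:ℝ) 1, F k q = lv k (min j b) := by
    intro k j
    have hmem := hlv_mem k (min j b) (min_le_right _ _)
    have himg := intermediate_value_Icc zero_le_one (hcont' k) hmem
    obtain ⟨q, hq, hfq⟩ := himg
    exact ⟨q, hq, hfq⟩
  choose a ha hFa using hquant
  have hFa' : ∀ (k : Fin K) (j : ℕ), j ≤ b → F k (a k j) = lv k j := by
    intro k j hj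
    rw [hFa k j, min_eq_left hj]
  -- the cover
  set gfun : (Fin K → Fin b) → (𝓧 × Fin K) → ℝ := fun j z =>
    ∑ k, Om k z.2 * (((if s z.1 k ≤ a k (j k : ℕ) then (1:ℝ) else 0)
      + (if s z.1 k ≤ a k ((j k : ℕ) + 1) then (1:ℝ) else 0)) / 2) with hgdef
  refine ⟨Finset.image gfun Finset.univ, ?_, ?_⟩
  · have h1 : (Finset.image gfun Finset.univ).card ≤ b ^ K := by
      refine le_trans Finset.card_image_le ?_
      simp
    calc ((Finset.image gfun Finset.univ).card : ℝ) ≤ ((b:ℝ))^K := by exact_mod_cast h1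
      _ ≤ x ^ K := pow_le_pow_left₀ hbpos.le hbx K
      _ = ((K : ℝ) / ε) ^ (2 * K) := by
          have hx2 : x = ((K:ℝ)/ε)^2 := by rw [hxdef, div_pow]
          rw [pow_mul, ← hx2]
  · intro t ht
    -- choose the cell for each coordinate
    have hcell : ∀ k : Fin K, ∃ m : Fin b,
        F k (a k (m : ℕ)) ≤ F k t ∧ F k t ≤ F k (a k ((m : ℕ) + 1)) := by
      intro k
      have hL : (0:ℝ) < 1 - F k 0 := by linarith [hF0 k]
      have hFt0 : F k 0 ≤ F k t := hFmono k ht.1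
      have hFt1 : F k t ≤ 1 := by
        have h := hFmono k ht.2
        rwa [hF1 k] at h
      set u : ℝ := (F k t - F k 0) / (1 - F k 0) with hudef
      have hu0 : 0 ≤ u := div_nonneg (by linarith) hL.le
      have hu1 : u ≤ 1 := by rw [hudef, div_le_one hL]; linarith
      have huL : u * (1 - F k 0) = F k t - F k 0 := div_mul_cancel₀ _ hL.ne'
      set m : ℕ := min ⌊u * b⌋₊ (b - 1) with hmdef
      have hmb : m < b := by omega
      refine ⟨⟨m, hmb⟩, ?_, ?_⟩
      · rw [hFa' k m (by omega)]
        have h1 : (m:ℝ) ≤ u * b := by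
          have hm1 : (m:ℝ) ≤ (⌊u * b⌋₊ : ℝ) := by exact_mod_cast Nat.min_le_left _ _
          exact hm1.trans (Nat.floor_le (by positivity))
        have h2 : (m:ℝ)/b ≤ u := (div_le_iff₀ hbpos).mpr h1
        have h3 : ((m:ℝ)/b) * (1 - F k 0) ≤ u * (1 - F k 0) :=
          mul_le_mul_of_nonneg_right h2 hL.le
        simp only [hlvdef]
        linarith
      · rw [hFa' k (m + 1) (by omega)]
        have h1 : u * b ≤ (m:ℝ) + 1 := by
          rcases Nat.lt_or_ge ⌊u * b⌋₊ b with hc | hc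
          · have hmeq : m = ⌊u * b⌋₊ := by omega
            have hfl := Nat.lt_floor_add_one (u * b)
            rw [hmeq]
            linarith
          · have hmeq : m = b - 1 := by omega
            have hub : u * b ≤ (b:ℝ) := by nlinarith
            have hcast : ((b - 1 : ℕ):ℝ) = (b:ℝ) - 1 := by
              have h := Nat.cast_sub (R := ℝ) hb1
              simpa using h
            rw [hmeq, hcast]
            linarith
        have h2 : u ≤ ((m:ℝ) + 1)/b := (le_div_iff₀ hbpos).mpr (by linarith)
        have h3 : u * (1 - F k 0) ≤ (((m:ℝ) + 1)/b) * (1 - F k 0) :=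
          mul_le_mul_of_nonneg_right h2 hL.le
        simp only [hlvdef]
        push_cast
        linarith
    choose jj hlow hup using hcell
    refine ⟨gfun jj, Finset.mem_image_of_mem _ (Finset.mem_univ _), ?_⟩
    -- pointwise ordering of thresholds
    have htmem : t ∈ Set.Icc (0:ℝ) 1 := ht
    have hAt : ∀ k, a k ((jj k : ℕ)) ≤ t := by
      intro k
      by_contra hcon
      push_neg at hcon
      have := hmono' k htmem (ha k ((jj k : ℕ))) hcon
      exact absurd (hlow k) (by linarith)
    have htA' : ∀ k, t ≤ a k ((jj k : ℕ) + 1) := by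
      intro k
      by_contra hcon
      push_neg at hcon
      have := hmono' k (ha k ((jj k : ℕ) + 1)) htmem hcon
      exact absurd (hup k) (by linarith)
    -- pointwise bound
    have hpt : ∀ z : 𝓧 × Fin K,
        ((∑ k, Om k z.2 * (if s z.1 k ≤ t then (1:ℝ) else 0)) - gfun jj z) ^ 2
          ≤ M^2 * K * ∑ k, ((if s z.1 k ≤ a k ((jj k : ℕ) + 1) then (1:ℝ) else 0)
              - (if s z.1 k ≤ a k ((jj k : ℕ)) then (1:ℝ) else 0)) / 4 := by
      intro z
      set d : Fin K → ℝ := fun k =>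
        (if s z.1 k ≤ t then (1:ℝ) else 0)
        - ((if s z.1 k ≤ a k ((jj k : ℕ)) then (1:ℝ) else 0)
           + (if s z.1 k ≤ a k ((jj k : ℕ) + 1) then (1:ℝ) else 0)) / 2 with hddef
      have hdiff : (∑ k, Om k z.2 * (if s z.1 k ≤ t then (1:ℝ) else 0)) - gfun jj z
          = ∑ k, Om k z.2 * d k := by
        simp only [hgdef, hddef, ← Finset.sum_sub_distrib]
        exact Finset.sum_congr rfl fun k _ => by ring
      have hd2 : ∀ k, (d k)^2 = ((if s z.1 k ≤ a k ((jj k : ℕ) + 1) then (1:ℝ) else 0)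
          - (if s z.1 k ≤ a k ((jj k : ℕ)) then (1:ℝ) else 0)) / 4 := by
        intro k
        have h1 : s z.1 k ≤ a k ((jj k : ℕ)) → s z.1 k ≤ t := fun h => le_trans h (hAt k)
        have h2 : s z.1 k ≤ t → s z.1 k ≤ a k ((jj k : ℕ) + 1) := fun h => le_trans h (htA' k)
        simp only [hddef]
        by_cases hA : s z.1 k ≤ a k ((jj k : ℕ)) <;>
          by_cases hT : s z.1 k ≤ t <;>
          by_cases hA' : s z.1 k ≤ a k ((jj k : ℕ) + 1) <;>
          first
            | exact absurd (h1 hA) hT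
            | exact absurd (h2 hT) hA'
            | (simp only [hA, hT, hA', if_true, if_false, if_pos, if_neg]; norm_num)
      rw [hdiff]
      calc (∑ k, Om k z.2 * d k)^2
          ≤ (K:ℝ) * ∑ k, (Om k z.2 * d k)^2 := by
            simpa using sq_sum_le_card_mul_sum_sq (s := Finset.univ)
              (f := fun k => Om k z.2 * d k)
        _ ≤ (K:ℝ) * ∑ k, M^2 * (d k)^2 := by
            have hterm : ∀ k : Fin K, (Om k z.2 * d k)^2 ≤ M^2 * (d k)^2 := by
              intro k
              rw [mul_pow]
              refine mul_le_mul_of_nonneg_right ?_ (sq_nonneg _)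
              rw [← sq_abs]
              exact pow_le_pow_left₀ (abs_nonneg _) (hMle k z.2) 2
            exact mul_le_mul_of_nonneg_left
              (Finset.sum_le_sum fun k _ => hterm k) (by positivity)
        _ = M^2 * K * ∑ k, (d k)^2 := by
            simp only [← Finset.mul_sum]
            ring
        _ = M^2 * K * ∑ k, ((if s z.1 k ≤ a k ((jj k : ℕ) + 1) then (1:ℝ) else 0)
              - (if s z.1 k ≤ a k ((jj k : ℕ)) then (1:ℝ) else 0)) / 4 := by
            congr 1
            exact Finset.sum_congr rfl fun k _ => hd2 k
    -- integrability of the bound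
    have hind_int : ∀ (k : Fin K) (c : ℝ),
        Integrable (fun z : 𝓧 × Fin K => if s z.1 k ≤ c then (1:ℝ) else 0) μ := by
      intro k c
      refine integrable_of_bdd'
        (Measurable.ite (hSmeas k c) measurable_const measurable_const) 1 ?_
      intro z
      split <;> norm_num
    have hterm_int : ∀ k : Fin K,
        Integrable (fun z : 𝓧 × Fin K =>
          ((if s z.1 k ≤ a k ((jj k : ℕ) + 1) then (1:ℝ) else 0)
            - (if s z.1 k ≤ a k ((jj k : ℕ)) then (1:ℝ) else 0)) / 4) μ :=
      fun k => ((hind_int k _).sub (hind_int k _)).div_const 4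
    have hB_int : Integrable (fun z : 𝓧 × Fin K => M^2 * K *
        ∑ k, ((if s z.1 k ≤ a k ((jj k : ℕ) + 1) then (1:ℝ) else 0)
          - (if s z.1 k ≤ a k ((jj k : ℕ)) then (1:ℝ) else 0)) / 4) μ :=
      (integrable_finset_sum _ fun k _ => hterm_int k).const_mul _
    have hIind : ∀ (k : Fin K) (c : ℝ),
        (∫ z, (if s z.1 k ≤ c then (1:ℝ) else 0) ∂μ) = F k c := by
      intro k c
      have h : (fun z : 𝓧 × Fin K => if s z.1 k ≤ c then (1:ℝ) else 0)
          = Set.indicator {z : 𝓧 × Fin K | s z.1 k ≤ c} 1 := by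
        ext z
        by_cases hz : s z.1 k ≤ c <;> simp [Set.indicator_apply, hz]
      rw [h, integral_indicator_one (hSmeas k c), hFdef]
      rfl
    have hstep : ∫ z, ((∑ k, Om k z.2 * (if s z.1 k ≤ t then (1:ℝ) else 0)) - gfun jj z)^2 ∂μ
        ≤ ∫ z, (M^2 * K * ∑ k, ((if s z.1 k ≤ a k ((jj k : ℕ) + 1) then (1:ℝ) else 0)
            - (if s z.1 k ≤ a k ((jj k : ℕ)) then (1:ℝ) else 0)) / 4) ∂μ :=
      integral_mono_of_nonneg (Filter.Eventually.of_forall fun z => sq_nonneg _)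
        hB_int (Filter.Eventually.of_forall hpt)
    have hBval : (∫ z, (M^2 * K * ∑ k, ((if s z.1 k ≤ a k ((jj k : ℕ) + 1) then (1:ℝ) else 0)
            - (if s z.1 k ≤ a k ((jj k : ℕ)) then (1:ℝ) else 0)) / 4) ∂μ)
        = M^2 * K * ∑ k, (F k (a k ((jj k : ℕ) + 1)) - F k (a k ((jj k : ℕ)))) / 4 := by
      rw [integral_const_mul]
      congr 1
      rw [integral_finset_sum _ fun k _ => hterm_int k]
      refine Finset.sum_congr rfl fun k _ => ?_
      rw [integral_div, integral_sub (hind_int k _) (hind_int k _), hIind, hIind]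
    have hsum : ∑ k : Fin K, (F k (a k ((jj k : ℕ) + 1)) - F k (a k ((jj k : ℕ)))) / 4
        ≤ (K:ℝ) * (1 / (4 * b)) := by
      have hterm : ∀ k : Fin K,
          (F k (a k ((jj k : ℕ) + 1)) - F k (a k ((jj k : ℕ)))) / 4 ≤ 1 / (4 * b) := by
        intro k
        have hmb : (jj k : ℕ) < b := (jj k).isLt
        rw [hFa' k _ (by omega), hFa' k _ (by omega)]
        have hdiff : lv k ((jj k : ℕ) + 1) - lv k ((jj k : ℕ)) = (1 - F k 0) / b := by
          simp only [hlvdef]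
          push_cast
          ring
        rw [hdiff, div_div, show (b:ℝ) * 4 = 4 * b by ring]
        exact div_le_div₀ zero_le_one (by linarith [hF0nonneg k]) (by positivity) le_rfl
      calc ∑ k : Fin K, (F k (a k ((jj k : ℕ) + 1)) - F k (a k ((jj k : ℕ)))) / 4
          ≤ ∑ _k : Fin K, 1 / (4 * (b:ℝ)) := Finset.sum_le_sum fun k _ => hterm k
        _ = (K:ℝ) * (1 / (4 * b)) := by
            rw [Finset.sum_const, Finset.card_univ]
            simp [nsmul_eq_mul]
    have hRHS : (ε * M / Real.sqrt 2)^2 = ε^2 * M^2 / 2 := by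
      rw [div_pow, mul_pow, Real.sq_sqrt (by norm_num : (0:ℝ) ≤ 2)]
    have hK2 : (K:ℝ)^2 ≤ 2 * b * ε^2 := by
      have h : (K:ℝ)^2 / ε^2 ≤ 2 * b := by
        rw [hxdef] at hxb
        linarith
      calc (K:ℝ)^2 = ((K:ℝ)^2 / ε^2) * ε^2 := by field_simp
        _ ≤ (2 * b) * ε^2 := mul_le_mul_of_nonneg_right h (by positivity)
        _ = 2 * b * ε^2 := by ring
    have hfinal : M^2 * K * ((K:ℝ) * (1 / (4 * b))) ≤ (ε * M / Real.sqrt 2)^2 := by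
      rw [hRHS]
      have heq : M^2 * K * ((K:ℝ) * (1 / (4 * b))) = (M^2 * (K:ℝ)^2) / (4 * b) := by
        field_simp
      rw [heq, div_le_div_iff₀ (by positivity) (by norm_num : (0:ℝ) < 2)]
      nlinarith [mul_le_mul_of_nonneg_left hK2 (by positivity : (0:ℝ) ≤ M^2)]
    calc ∫ z, ((∑ k, Om k z.2 * (if s z.1 k ≤ t then (1:ℝ) else 0)) - gfun jj z)^2 ∂μ
        ≤ ∫ z, (M^2 * K * ∑ k, ((if s z.1 k ≤ a k ((jj k : ℕ) + 1) then (1:ℝ) else 0)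
            - (if s z.1 k ≤ a k ((jj k : ℕ)) then (1:ℝ) else 0)) / 4) ∂μ := hstep
      _ = M^2 * K * ∑ k, (F k (a k ((jj k : ℕ) + 1)) - F k (a k ((jj k : ℕ)))) / 4 := hBval
      _ ≤ M^2 * K * ((K:ℝ) * (1 / (4 * b))) :=
          mul_le_mul_of_nonneg_left hsum (by positivity)
      _ ≤ (ε * M / Real.sqrt 2)^2 := hfinal
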